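/- Let u, v : Fin n → ℝ both be monotone nondecreasing, let p ≥ 1 be a real number, and let π be any permutation of Fin n. Then Σ_{i} |u(i) − v(i)|^p ≤ Σ_{i} |u(i) − v(π(i))|^p. In particular, among all bijective matchings between the entries of two sorted tuples, the identity (order-preserving) matching minimizes the sum of p-th powers of absolute differences. -/

import Mathlib

open Finset

private lemma convexOn_abs_rpow {p : ℝ} (hp : 1 ≤ p) :
    ConvexOn ℝ Set.univ (fun x : ℝ => |x| ^ p) := by
  have habs : ConvexOn ℝ Set.univ (fun x : ℝ => |x|) := by
    exact (convexOn_univ_norm (E := ℝ))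
  have himg : (fun x : ℝ => |x|) '' Set.univ ⊆ Set.Ici (0 : ℝ) := by
    rintro y ⟨x, -, rfl⟩; exact abs_nonneg x
  have hrpow : ConvexOn ℝ ((fun x : ℝ => |x|) '' Set.univ) (fun x : ℝ => x ^ p) :=
    (convexOn_rpow hp).subset himg (by
      rintro y ⟨x, -, rfl⟩ z ⟨w, -, rfl⟩ a b ha hb hab
      exact ⟨a • |x| + b • |w|, Set.mem_univ _, by
        simp only [smul_eq_mul]
        exact abs_of_nonneg (by positivity)⟩)
  exact hrpow.comp habs (fun y hy z hz hyz => Real.rpow_le_rpow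
    (by rcases hy with ⟨x, -, rfl⟩; exact abs_nonneg x) hyz (le_trans zero_le_one hp))

private lemma pair_exchange {f : ℝ → ℝ} (hf : ConvexOn ℝ Set.univ f)
    {x₁ x x₂ : ℝ} (h1 : x₁ ≤ x) (h2 : x ≤ x₂) :
    f x + f (x₁ + x₂ - x) ≤ f x₁ + f x₂ := by
  rcases eq_or_lt_of_le (h1.trans h2) with h | h
  · have hx1 : x = x₁ := le_antisymm (h ▸ h2) h1
    have hx2 : x₁ + x₂ - x = x₂ := by rw [hx1]; ring
    rw [hx2, hx1]
  · have hd : (0:ℝ) < x₂ - x₁ := sub_pos.2 h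
    set t := (x₂ - x) / (x₂ - x₁) with ht
    have ht0 : 0 ≤ t := div_nonneg (sub_nonneg.2 h2) hd.le
    have ht1 : t ≤ 1 := by rw [ht, div_le_one hd]; linarith
    have hx : t * x₁ + (1 - t) * x₂ = x := by
      have e1 : t * x₁ + (1 - t) * x₂ = x₂ - (x₂ - x) / (x₂ - x₁) * (x₂ - x₁) := by
        rw [ht]; ring
      rw [e1, div_mul_cancel₀ _ hd.ne']; ring
    have hy : (1 - t) * x₁ + t * x₂ = x₁ + x₂ - x := by
      have e1 : (1 - t) * x₁ + t * x₂ = x₁ + (x₂ - x) / (x₂ - x₁) * (x₂ - x₁) := by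
        rw [ht]; ring
      rw [e1, div_mul_cancel₀ _ hd.ne']; ring
    have H1 := hf.2 (Set.mem_univ x₁) (Set.mem_univ x₂) ht0
      (by linarith : (0:ℝ) ≤ 1 - t) (by ring : t + (1 - t) = 1)
    have H2 := hf.2 (Set.mem_univ x₁) (Set.mem_univ x₂)
      (by linarith : (0:ℝ) ≤ 1 - t) ht0 (by ring : (1 - t) + t = 1)
    simp only [smul_eq_mul] at H1 H2
    rw [hx] at H1; rw [hy] at H2
    linarith

private lemma exchange {p : ℝ} (hp : 1 ≤ p) {a b c d : ℝ}
    (hab : a ≤ b) (hcd : c ≤ d) :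
    |a - c| ^ p + |b - d| ^ p ≤ |a - d| ^ p + |b - c| ^ p := by
  have hf := convexOn_abs_rpow hp
  have h1 : a - d ≤ a - c := by linarith
  have h2 : a - c ≤ b - c := by linarith
  have := pair_exchange hf h1 h2
  have hsum : (a - d) + (b - c) - (a - c) = b - d := by ring
  rw [hsum] at this
  linarith

private lemma key {p : ℝ} (hp : 1 ≤ p) :
    ∀ n (u v : Fin n → ℝ), Monotone u → Monotone v → ∀ π : Equiv.Perm (Fin n),
      ∑ i : Fin n, |u i - v i| ^ p ≤ ∑ i : Fin n, |u i - v (π i)| ^ p := by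
  intro n
  induction n with
  | zero => intro u v _ _ π; simp
  | succ n ih =>
    intro u v hu hv π
    set j : Fin (n + 1) := π⁻¹ 0 with hj
    set π' : Equiv.Perm (Fin (n + 1)) := π * Equiv.swap 0 j with hπ'
    have hπ'0 : π' 0 = 0 := by
      rw [hπ', Equiv.Perm.mul_apply, Equiv.swap_apply_left, hj, Equiv.Perm.inv_def, Equiv.apply_symm_apply]
    -- Step 2 : cost π' ≤ cost π
    have step2 : ∑ i, |u i - v (π' i)| ^ p ≤ ∑ i, |u i - v (π i)| ^ p := by
      have hre : ∑ i, |u i - v (π' i)| ^ p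
          = ∑ i, |u (Equiv.swap 0 j i) - v (π i)| ^ p := by
        refine Fintype.sum_equiv (Equiv.swap 0 j)
          (fun i => |u (Equiv.swap 0 j i) - v (π i)| ^ p)
          (fun i => |u i - v (π' i)| ^ p) (fun x => ?_) |>.symm
        simp [hπ', Equiv.swap_apply_self]
      rw [hre]
      rcases eq_or_ne j 0 with h0 | h0
      · simp [h0]
      · have hsub : ({0, j} : Finset (Fin (n+1))) ⊆ univ := subset_univ _
        have hL := Finset.sum_sdiff (f := fun i => |u (Equiv.swap 0 j i) - v (π i)| ^ p) hsub
        have hR := Finset.sum_sdiff (f := fun i => |u i - v (π i)| ^ p) hsub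
        rw [← hL, ← hR]
        have hcompl : ∑ i ∈ univ \ {0, j}, |u (Equiv.swap 0 j i) - v (π i)| ^ p
            = ∑ i ∈ univ \ {0, j}, |u i - v (π i)| ^ p := by
          refine Finset.sum_congr rfl fun i hi => ?_
          simp only [Finset.mem_sdiff, Finset.mem_insert, Finset.mem_singleton] at hi
          rw [Equiv.swap_apply_of_ne_of_ne (fun h => hi.2 (Or.inl h)) (fun h => hi.2 (Or.inr h))]
        rw [hcompl]
        refine add_le_add_right ?_ _
        rw [Finset.sum_pair (Ne.symm h0), Finset.sum_pair (Ne.symm h0)]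
        rw [Equiv.swap_apply_left, Equiv.swap_apply_right]
        have hπj : π j = 0 := by simp [hj]
        rw [hπj]
        have h1 : u 0 ≤ u j := hu (Fin.zero_le j)
        have h2 : v 0 ≤ v (π 0) := hv (Fin.zero_le (π 0))
        have := exchange hp h1 h2
        linarith
    -- Step 3 : cost id ≤ cost π'
    refine le_trans ?_ step2
    set σ : Equiv.Perm (Fin n) := (Equiv.Perm.decomposeFin π').2 with hσ
    have h0 : Equiv.Perm.decomposeFin.symm ((Equiv.Perm.decomposeFin π').1, σ) = π' := by
      rw [hσ, Prod.mk.eta, Equiv.symm_apply_apply]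
    have h1 : (Equiv.Perm.decomposeFin π').1 = 0 := by
      conv_rhs => rw [← hπ'0, ← h0, Equiv.Perm.decomposeFin_symm_apply_zero]
    have hd : Equiv.Perm.decomposeFin.symm (0, σ) = π' := by rw [← h1]; exact h0
    have hsucc : ∀ x : Fin n, π' x.succ = (σ x).succ := by
      intro x
      conv_lhs => rw [← hd]
      rw [Equiv.Perm.decomposeFin_symm_apply_succ]
      simp
    rw [Fin.sum_univ_succ, Fin.sum_univ_succ, hπ'0]
    refine add_le_add_right ?_ _
    have hu' : Monotone (fun i : Fin n => u i.succ) :=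
      hu.comp (Fin.strictMono_succ.monotone)
    have hv' : Monotone (fun i : Fin n => v i.succ) :=
      hv.comp (Fin.strictMono_succ.monotone)
    have := ih (fun i => u i.succ) (fun i => v i.succ) hu' hv' σ
    simpa [hsucc] using this

/-- For monotone nondecreasing tuples `u, v : Fin n → ℝ`, a real exponent
`p ≥ 1`, and any permutation `π` of `Fin n`, the order-preserving (identity) matching
minimizes the sum of `p`-th powers of absolute differences:
`Σ_i |u i - v i|^p ≤ Σ_i |u i - v (π i)|^p`. (Here `^` is the real power `rpow`.) -/
theorem sorted_matching_minimizes_p_cost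
    (n : ℕ) (u v : Fin n → ℝ) (hu : Monotone u) (hv : Monotone v)
    (p : ℝ) (hp : 1 ≤ p) (π : Equiv.Perm (Fin n)) :
    ∑ i : Fin n, |u i - v i| ^ p ≤ ∑ i : Fin n, |u i - v (π i)| ^ p :=
  key hp n u v hu hv π
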